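/- Let f(Λ) = √(120(2 − cos Λ − cos²Λ) / (97 + 76 cos Λ + 7 cos²Λ)). Then f(Λ) = Λ + (11/120960)Λ⁷ + O(Λ⁹) as Λ → 0⁺. -/

import Mathlib

open Real Filter Asymptotics Topology
set_option maxHeartbeats 1000000

section aux
open Complex Finset

lemma stmt14_sum_eq (x : ℝ) :
    (∑ m ∈ range 10, ((x:ℂ)*I)^m / m.factorial
      + ∑ m ∈ range 10, (-((x:ℂ)*I))^m / m.factorial) / 2
    = ((1 - x^2/2 + x^4/24 - x^6/720 + x^8/40320 : ℝ) : ℂ) := by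
  have h2 : (I:ℂ)^2 = -1 := Complex.I_sq
  have h4 : (I:ℂ)^4 = 1 := by rw [show (4:ℕ) = 2*2 by norm_num, pow_mul, h2]; ring
  have h6 : (I:ℂ)^6 = -1 := by rw [show (6:ℕ) = 2*3 by norm_num, pow_mul, h2]; ring
  have h8 : (I:ℂ)^8 = 1 := by rw [show (8:ℕ) = 2*4 by norm_num, pow_mul, h2]; ring
  simp only [Finset.sum_range_succ, Finset.range_zero, Finset.sum_empty, Nat.factorial]
  push_cast
  ring_nf
  rw [h2, h4, h6, h8]
  ring

lemma stmt14_cos_taylor10 (x : ℝ) (hx : |x| ≤ 1) :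
    |Real.cos x - (1 - x^2/2 + x^4/24 - x^6/720 + x^8/40320)| ≤ x^10 := by
  have hxabs : ‖(x:ℂ)*I‖ = |x| := by
    rw [norm_mul, Complex.norm_I, mul_one, Complex.norm_real, Real.norm_eq_abs]
  have hxabs2 : ‖-((x:ℂ)*I)‖ = |x| := by
    rw [norm_neg, hxabs]
  have e1 := Complex.exp_bound (x := (x:ℂ)*I) (by rw [hxabs]; exact hx) (n := 10) (by norm_num)
  have e2 := Complex.exp_bound (x := -((x:ℂ)*I)) (by rw [hxabs2]; exact hx) (n := 10) (by norm_num)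
  rw [hxabs] at e1; rw [hxabs2] at e2
  have hcos : Real.cos x - (1 - x^2/2 + x^4/24 - x^6/720 + x^8/40320)
      = ((Complex.cos x - ((1 - x^2/2 + x^4/24 - x^6/720 + x^8/40320 : ℝ) : ℂ)).re) := by
    simp only [Complex.sub_re, Complex.ofReal_re, Complex.cos_ofReal_re]
  have hcc : Complex.cos x - ((1 - x^2/2 + x^4/24 - x^6/720 + x^8/40320 : ℝ) : ℂ)
      = ((Complex.exp ((x:ℂ)*I) - ∑ m ∈ range 10, ((x:ℂ)*I)^m / m.factorial)
        + (Complex.exp (-((x:ℂ)*I)) - ∑ m ∈ range 10, (-((x:ℂ)*I))^m / m.factorial)) / 2 := by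
    rw [Complex.cos, neg_mul, ← stmt14_sum_eq x]
    ring
  calc |Real.cos x - (1 - x^2/2 + x^4/24 - x^6/720 + x^8/40320)|
      ≤ ‖(Complex.cos x - ((1 - x^2/2 + x^4/24 - x^6/720 + x^8/40320 : ℝ) : ℂ))‖ := by
        rw [hcos]; exact Complex.abs_re_le_norm _
    _ ≤ (‖(Complex.exp ((x:ℂ)*I) - ∑ m ∈ range 10, ((x:ℂ)*I)^m / m.factorial)‖
        + ‖(Complex.exp (-((x:ℂ)*I)) - ∑ m ∈ range 10, (-((x:ℂ)*I))^m / m.factorial)‖) / 2 := by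
        rw [hcc, norm_div]
        simp only [Complex.norm_two]
        gcongr
        exact norm_add_le _ _
    _ ≤ (|x|^10 * (11 * ((Nat.factorial 10) * 10 : ℝ)⁻¹) + |x|^10 * (11 * ((Nat.factorial 10) * 10 : ℝ)⁻¹)) / 2 := by
        gcongr
        · exact le_trans e1 (by norm_num)
        · exact le_trans e2 (by norm_num)
    _ ≤ x^10 := by
        have h10 : |x|^10 = x^10 := by rw [pow_abs, _root_.abs_of_nonneg (by positivity)]
        rw [h10]
        have hfac : (Nat.factorial 10 : ℝ) = 3628800 := by norm_num [Nat.factorial]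
        rw [hfac]
        have hx10 : (0:ℝ) ≤ x^10 := by positivity
        norm_num
        nlinarith [hx10]

end aux


lemma stmt14_main (Λ c t p : ℝ) (h0 : 0 < Λ) (h1 : Λ < 1)
    (hcle : c ≤ 1) (hcge : -1 ≤ c)
    (ht : t = 1 - Λ^2/2 + Λ^4/24 - Λ^6/720 + Λ^8/40320)
    (hp : p = Λ + 11/120960*Λ^7)
    (hr : |c - t| ≤ Λ^10) :
    |Real.sqrt (120*(2 - c - c^2)/(97 + 76*c + 7*c^2)) - p| ≤ 2000 * Λ^9 := by
  have hΛ10 : (0:ℝ) ≤ Λ^10 := by positivity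
  have hΛ10le : Λ^10 ≤ 1 := pow_le_one₀ h0.le h1.le
  have htb : |t| ≤ 2 := by
    have hcabs : |c| ≤ 1 := abs_le.mpr ⟨hcge, hcle⟩
    have h2 : |t| ≤ |c| + |c - t| := by
      have := abs_sub_abs_le_abs_sub t c
      rw [abs_sub_comm t c] at this
      linarith
    linarith
  have hpge : Λ ≤ p := by rw [hp]; nlinarith [pow_nonneg h0.le 7]
  have hppos : 0 < p := lt_of_lt_of_le h0 hpge
  have hple : p ≤ 2 := by
    rw [hp]; nlinarith [pow_le_one₀ h0.le h1.le (n := 7), pow_nonneg h0.le 7]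
  have hp2 : p^2 ≤ 4 := by nlinarith
  -- polynomial identity at t
  have hpoly : 120*(2 - t - t^2) - p^2*(97 + 76*t + 7*t^2)
      = Λ^10 * (19/20160 - 1/2016*Λ^2 + 22187/406425600*Λ^4 - 31/8601600*Λ^6
        + 3779/29262643200*Λ^8 - 1441/877879296000*Λ^10 - 5489/49161240576000*Λ^12
        + 1859/252829237248000*Λ^14 - 3509/15169754234880000*Λ^16
        + 121/30339508469760000*Λ^18 - 121/3398024948613120000*Λ^20) := by
    rw [ht, hp]; ring
  have hQ : |19/20160 - 1/2016*Λ^2 + 22187/406425600*Λ^4 - 31/8601600*Λ^6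
        + 3779/29262643200*Λ^8 - 1441/877879296000*Λ^10 - 5489/49161240576000*Λ^12
        + 1859/252829237248000*Λ^14 - 3509/15169754234880000*Λ^16
        + 121/30339508469760000*Λ^18 - 121/3398024948613120000*Λ^20| ≤ 1 := by
    have e2 := pow_le_one₀ h0.le h1.le (n := 2)
    have e4 := pow_le_one₀ h0.le h1.le (n := 4)
    have e6 := pow_le_one₀ h0.le h1.le (n := 6)
    have e8 := pow_le_one₀ h0.le h1.le (n := 8)
    have e10 := pow_le_one₀ h0.le h1.le (n := 10)
    have e12 := pow_le_one₀ h0.le h1.le (n := 12)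
    have e14 := pow_le_one₀ h0.le h1.le (n := 14)
    have e16 := pow_le_one₀ h0.le h1.le (n := 16)
    have e18 := pow_le_one₀ h0.le h1.le (n := 18)
    have e20 := pow_le_one₀ h0.le h1.le (n := 20)
    have f2 : (0:ℝ) ≤ Λ^2 := by positivity
    have f4 : (0:ℝ) ≤ Λ^4 := by positivity
    have f6 : (0:ℝ) ≤ Λ^6 := by positivity
    have f8 : (0:ℝ) ≤ Λ^8 := by positivity
    have f12 : (0:ℝ) ≤ Λ^12 := by positivity
    have f14 : (0:ℝ) ≤ Λ^14 := by positivity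
    have f16 : (0:ℝ) ≤ Λ^16 := by positivity
    have f18 : (0:ℝ) ≤ Λ^18 := by positivity
    have f20 : (0:ℝ) ≤ Λ^20 := by positivity
    rw [abs_le]
    constructor <;> linarith
  have hAt : |120*(2 - t - t^2) - p^2*(97 + 76*t + 7*t^2)| ≤ Λ^10 := by
    rw [hpoly, abs_mul, _root_.abs_of_nonneg hΛ10]
    nlinarith [hQ, hΛ10]
  have hE : (120*(2 - c - c^2) - p^2*(97 + 76*c + 7*c^2))
      - (120*(2 - t - t^2) - p^2*(97 + 76*t + 7*t^2))
      = (c - t) * (-(120 + 120*(t+c) + p^2*(76+7*(t+c)))) := by ring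
  have hEb : |(-(120 + 120*(t+c) + p^2*(76+7*(t+c))))| ≤ 1000 := by
    rw [abs_le]
    obtain ⟨h1', h2'⟩ := abs_le.mp htb
    have hp2nn : 0 ≤ p^2 := sq_nonneg p
    constructor <;> nlinarith
  have hAc : |120*(2 - c - c^2) - p^2*(97 + 76*c + 7*c^2)| ≤ 1001 * Λ^10 := by
    have hd : |(120*(2 - c - c^2) - p^2*(97 + 76*c + 7*c^2))
        - (120*(2 - t - t^2) - p^2*(97 + 76*t + 7*t^2))| ≤ 1000 * Λ^10 := by
      rw [hE, abs_mul]
      calc |c - t| * |(-(120 + 120*(t+c) + p^2*(76+7*(t+c))))|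
          ≤ Λ^10 * 1000 := mul_le_mul hr hEb (abs_nonneg _) hΛ10
        _ = 1000 * Λ^10 := by ring
    calc |120*(2 - c - c^2) - p^2*(97 + 76*c + 7*c^2)|
        ≤ |120*(2 - t - t^2) - p^2*(97 + 76*t + 7*t^2)|
          + |(120*(2 - c - c^2) - p^2*(97 + 76*c + 7*c^2))
            - (120*(2 - t - t^2) - p^2*(97 + 76*t + 7*t^2))| := by
          have := abs_add_le (120*(2 - t - t^2) - p^2*(97 + 76*t + 7*t^2))
            ((120*(2 - c - c^2) - p^2*(97 + 76*c + 7*c^2))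
            - (120*(2 - t - t^2) - p^2*(97 + 76*t + 7*t^2)))
          simpa using this
      _ ≤ Λ^10 + 1000 * Λ^10 := add_le_add hAt hd
      _ = 1001 * Λ^10 := by ring
  have hD : (28:ℝ) ≤ 97 + 76*c + 7*c^2 := by
    nlinarith [mul_nonneg (by linarith : (0:ℝ) ≤ c + 1) (by linarith : (0:ℝ) ≤ 69 + 7*c)]
  have hDpos : (0:ℝ) < 97 + 76*c + 7*c^2 := by linarith
  have hNnn : (0:ℝ) ≤ 120*(2 - c - c^2) := by
    nlinarith [mul_nonneg (by linarith : (0:ℝ) ≤ 1 - c) (by linarith : (0:ℝ) ≤ 2 + c)]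
  have hgnn : 0 ≤ 120*(2 - c - c^2) / (97 + 76*c + 7*c^2) := div_nonneg hNnn hDpos.le
  have hgsub : 120*(2 - c - c^2) / (97 + 76*c + 7*c^2) - p^2
      = (120*(2 - c - c^2) - p^2*(97 + 76*c + 7*c^2)) / (97 + 76*c + 7*c^2) := by
    rw [eq_div_iff hDpos.ne', sub_mul, div_mul_cancel₀ _ hDpos.ne']
  have hgb : |120*(2 - c - c^2) / (97 + 76*c + 7*c^2) - p^2| ≤ 36 * Λ^10 := by
    rw [hgsub, abs_div, _root_.abs_of_pos hDpos]
    calc |120*(2 - c - c^2) - p^2*(97 + 76*c + 7*c^2)| / (97 + 76*c + 7*c^2)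
        ≤ (1001 * Λ^10) / 28 := div_le_div₀ (by positivity) hAc (by norm_num) hD
      _ ≤ 36 * Λ^10 := by nlinarith
  set g : ℝ := 120*(2 - c - c^2) / (97 + 76*c + 7*c^2)
  have hsg : Real.sqrt g * Real.sqrt g = g := Real.mul_self_sqrt hgnn
  have hden : 0 < Real.sqrt g + p := by positivity
  have hkey : Real.sqrt g - p = (g - p^2) / (Real.sqrt g + p) := by
    rw [eq_div_iff hden.ne']
    nlinarith [hsg]
  rw [hkey, abs_div, _root_.abs_of_pos hden]
  have hdenΛ : Λ ≤ Real.sqrt g + p := le_trans hpge (by nlinarith [Real.sqrt_nonneg g])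
  calc |g - p^2| / (Real.sqrt g + p) ≤ (36 * Λ^10) / Λ :=
      div_le_div₀ (by positivity) hgb h0 hdenΛ
    _ = 36 * Λ^9 := by field_simp
    _ ≤ 2000 * Λ^9 := by nlinarith [pow_nonneg h0.le 9]

theorem stmt14 :
    (fun Λ : ℝ =>
        Real.sqrt (120 * (2 - Real.cos Λ - Real.cos Λ ^ 2) /
          (97 + 76 * Real.cos Λ + 7 * Real.cos Λ ^ 2))
        - (Λ + (11/120960) * Λ^7)) =O[𝓝[>] (0:ℝ)] (fun Λ => Λ^9) := by
  rw [Asymptotics.isBigO_iff]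
  refine ⟨2000, ?_⟩
  filter_upwards [Ioo_mem_nhdsGT (by norm_num : (0:ℝ) < 1)] with Λ hΛ
  obtain ⟨h0, h1⟩ := hΛ
  have hΛabs : |Λ| ≤ 1 := by rw [_root_.abs_of_nonneg h0.le]; exact h1.le
  have hr := stmt14_cos_taylor10 Λ hΛabs
  have hmain := stmt14_main Λ (Real.cos Λ) (1 - Λ^2/2 + Λ^4/24 - Λ^6/720 + Λ^8/40320)
    (Λ + 11/120960*Λ^7) h0 h1 (Real.cos_le_one Λ) (Real.neg_one_le_cos Λ) rfl rfl hr
  rw [Real.norm_eq_abs, Real.norm_eq_abs, _root_.abs_of_nonneg (by positivity : (0:ℝ) ≤ Λ^9)]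
  exact hmain
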